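/- A metric space does not contain a strictly increasing ω₁-indexed chain of compact subsets; that is, if ⟨H_α : α < ω₁⟩ is a family of compact subsets of a metric space with H_α ⊆ H_β for α < β, then the chain is not strict: there exist α < β with H_α = H_β. -/

import Mathlib

open Cardinal Ordinal Metric Set Filter

/-- A metric space contains no strictly increasing ω₁-indexed chain of compact
subsets: any increasing ω₁-chain of compact sets fails to be strict. -/
theorem no_strict_omega1_chain_of_compacts {Y : Type*} [MetricSpace Y]
    (H : {o : Ordinal // o < (Cardinal.aleph 1).ord} → Set Y)
    (hcpt : ∀ α, IsCompact (H α))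
    (hmono : ∀ α β, α < β → H α ⊆ H β) :
    ∃ α β, α < β ∧ H α = H β := by
  by_contra hcon
  push_neg at hcon
  have hlim : Order.IsSuccLimit ((Cardinal.aleph 1).ord) :=
    Cardinal.isSuccLimit_ord (Cardinal.aleph0_le_aleph 1)
  -- the successor map on indices
  let s : {o : Ordinal // o < (Cardinal.aleph 1).ord} →
      {o : Ordinal // o < (Cardinal.aleph 1).ord} :=
    fun α => ⟨α.1 + 1, by
      rw [Ordinal.add_one_eq_succ]; exact hlim.succ_lt α.2⟩
  have hlt_s : ∀ α, α < s α := by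
    intro α
    show α.1 < α.1 + 1
    rw [Ordinal.add_one_eq_succ]
    exact Order.lt_succ _
  have hs_le : ∀ α β, α < β → s α ≤ β := by
    intro α β h
    show α.1 + 1 ≤ β.1
    rw [Ordinal.add_one_eq_succ]
    exact Order.succ_le_of_lt h
  have hmono' : ∀ α β, α ≤ β → H α ⊆ H β := by
    intro α β h
    rcases eq_or_lt_of_le h with rfl | h
    · exact subset_rfl
    · exact hmono _ _ h
  -- choose witnesses of strictness
  have hstrict : ∀ α, ∃ p, p ∈ H (s α) ∧ p ∉ H α := by
    intro α
    have : H α ⊂ H (s α) :=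
      (hmono _ _ (hlt_s α)).ssubset_of_ne (hcon α (s α) (hlt_s α))
    obtain ⟨p, hp1, hp2⟩ := exists_of_ssubset this
    exact ⟨p, hp1, hp2⟩
  choose x hx1 hx2 using hstrict
  have hmem : ∀ α β, α < β → x α ∈ H β :=
    fun α β h => hmono' _ _ (hs_le α β h) (hx1 α)
  set ε : {o : Ordinal // o < (Cardinal.aleph 1).ord} → ℝ :=
    fun α => infDist (x α) (H α) with hε
  have hsep : ∀ α β, α < β → ε β ≤ dist (x α) (x β) := by
    intro α β h
    rw [dist_comm]
    exact infDist_le_dist_of_mem (hmem α β h)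
  have hzero : (0 : Ordinal) < (Cardinal.aleph 1).ord := hlim.pos
  have hpos : ∀ β, (⟨0, hzero⟩ : {o : Ordinal // o < (Cardinal.aleph 1).ord}) < β →
      0 < ε β := by
    intro β hβ
    have hne : (H β).Nonempty := ⟨x ⟨0, hzero⟩, hmem _ _ hβ⟩
    exact ((hcpt β).isClosed.notMem_iff_infDist_pos hne).1 (hx2 β)
  -- there is n with infinitely many indices of separation ≥ 1/(n+1)
  have hinf : ∃ n : ℕ, {α | 1 / (n + 1 : ℝ) ≤ ε α}.Infinite := by
    by_contra hfin
    push_neg at hfin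
    have hcount : (Set.univ : Set {o : Ordinal // o < (Cardinal.aleph 1).ord}).Countable := by
      have : (Set.univ : Set {o : Ordinal // o < (Cardinal.aleph 1).ord}) ⊆
          insert ⟨0, hzero⟩ (⋃ n : ℕ, {α | 1 / (n + 1 : ℝ) ≤ ε α}) := by
        intro α _
        rcases eq_or_lt_of_le (show (⟨0, hzero⟩ : {o : Ordinal // o < (Cardinal.aleph 1).ord})
            ≤ α from Subtype.coe_le_coe.1 (zero_le (a := α.1))) with h | h
        · exact h ▸ Set.mem_insert _ _
        · obtain ⟨n, hn⟩ := exists_nat_one_div_lt (hpos α h)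
          exact Set.mem_insert_iff.2 (Or.inr (Set.mem_iUnion.2 ⟨n, le_of_lt hn⟩))
      exact Set.Countable.mono this
        ((Set.countable_iUnion (fun n => (hfin n).countable)).insert _)
    have : Countable {o : Ordinal // o < (Cardinal.aleph 1).ord} :=
      Set.countable_univ_iff.1 hcount
    have h1 : #{o : Ordinal // o < (Cardinal.aleph 1).ord} ≤ ℵ₀ := Cardinal.mk_le_aleph0
    have h2 : #{o : Ordinal // o < (Cardinal.aleph 1).ord}
        = Cardinal.lift ((Cardinal.aleph 1).ord).card := Ordinal.mk_Iio_ordinal _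
    rw [h2, Cardinal.card_ord] at h1
    have h3 : Cardinal.aleph 1 ≤ ℵ₀ := by
      rw [← Cardinal.lift_le.{_}]
      exact h1.trans (by simp)
    exact absurd h3 (not_le.2 (Cardinal.aleph0_lt_aleph_one))
  obtain ⟨n, hn⟩ := hinf
  -- an injective sequence of such indices
  let f := hn.natEmbedding
  let g : ℕ → {o : Ordinal // o < (Cardinal.aleph 1).ord} := fun k => (f k).1
  have hgsep : ∀ k, 1 / (n + 1 : ℝ) ≤ ε (g k) := fun k => (f k).2
  have hginj : Function.Injective g := fun a b h => f.injective (Subtype.ext h)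
  -- a bound above all of them
  have hbound : (⨆ k : ℕ, (g k).1 + 1) < (Cardinal.aleph 1).ord := by
    apply Cardinal.iSup_lt_ord_lift_of_isRegular Cardinal.isRegular_aleph_one
    · simpa using Cardinal.aleph0_lt_aleph_one
    · exact fun k => (s (g k)).2
  set γ : {o : Ordinal // o < (Cardinal.aleph 1).ord} := ⟨_, hbound⟩ with hγ
  have hyk : ∀ k, x (g k) ∈ H γ := by
    intro k
    refine hmono' (s (g k)) γ ?_ (hx1 (g k))
    exact Ordinal.le_iSup (fun k : ℕ => (g k).1 + 1) k
  -- the points are 1/(n+1)-separated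
  have hptsep : ∀ k l, k ≠ l → 1 / (n + 1 : ℝ) ≤ dist (x (g k)) (x (g l)) := by
    intro k l hkl
    rcases lt_or_gt_of_ne (fun h : g k = g l => hkl (hginj h)) with h | h
    · exact (hgsep l).trans (hsep _ _ h)
    · rw [dist_comm]
      exact (hgsep k).trans (hsep _ _ h)
  -- but compactness gives a convergent subsequence, contradiction
  obtain ⟨a, -, φ, hφ, hconv⟩ := (hcpt γ).tendsto_subseq hyk
  have hhalf : 0 < 1 / (2 * (n + 1) : ℝ) := by positivity
  obtain ⟨N, hN⟩ := (Metric.tendsto_atTop.1 hconv) _ hhalf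
  have h1 := hN N le_rfl
  have h2 := hN (N + 1) (Nat.le_succ N)
  have hne : φ N ≠ φ (N + 1) := fun h => absurd (hφ.injective h) (Nat.succ_ne_self N).symm
  have := hptsep (φ N) (φ (N + 1)) hne
  have htri : dist (x (g (φ N))) (x (g (φ (N + 1)))) < 1 / (n + 1 : ℝ) :=
    calc dist (x (g (φ N))) (x (g (φ (N + 1))))
        ≤ dist (x (g (φ N))) a + dist (x (g (φ (N + 1)))) a := dist_triangle_right _ _ _
      _ < 1 / (2 * (n + 1) : ℝ) + 1 / (2 * (n + 1) : ℝ) := add_lt_add h1 h2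
      _ = 1 / (n + 1 : ℝ) := by rw [← add_div]; rw [div_eq_div_iff (by positivity) (by positivity)]; ring
  exact absurd this (not_le.2 htri)
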